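/- Let K be an imaginary quadratic field. Then R_K = ℤ + 2·O_K; that is, R_K = {a + 2b : a is the image in O_K of an integer, b ∈ O_K}. -/

import Mathlib

noncomputable section

open NumberField

lemma exists_conj_pair (K : Type) [Field K] [NumberField K]
    (hdeg : Module.finrank ℚ K = 2) (him : IsEmpty (K →+* ℝ)) :
    ∃ σ σ' : K →ₐ[ℚ] ℂ, (∀ x, σ' x = (starRingEnd ℂ) (σ x)) ∧
      (∀ x : K, algebraMap ℚ ℂ (Algebra.trace ℚ K x) = σ x + σ' x) ∧
      (∀ x : K, algebraMap ℚ ℂ (Algebra.norm ℚ x) = σ x * σ' x) := by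
  classical
  have hcard : Fintype.card (K →ₐ[ℚ] ℂ) = 2 := by rw [AlgHom.card]; exact hdeg
  have hne : Nonempty (K →ₐ[ℚ] ℂ) := Fintype.card_pos_iff.mp (by omega)
  obtain ⟨σ⟩ := hne
  set σ' : K →ₐ[ℚ] ℂ := (Complex.conjAe.toAlgHom.restrictScalars ℚ).comp σ with hσ'
  have happ : ∀ x, σ' x = (starRingEnd ℂ) (σ x) := fun x => rfl
  have hss : σ' ≠ σ := by
    intro h
    have hreal : NumberField.ComplexEmbedding.IsReal (σ.toRingHom) := by
      rw [NumberField.ComplexEmbedding.isReal_iff]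
      ext x
      have := congrFun (congrArg DFunLike.coe h) x
      rw [happ x] at this
      exact this
    exact him.elim hreal.embedding
  have huniv : (Finset.univ : Finset (K →ₐ[ℚ] ℂ)) = {σ, σ'} := by
    apply (Finset.eq_of_subset_of_card_le (Finset.subset_univ _) _).symm
    rw [Finset.card_univ, hcard, Finset.card_pair (Ne.symm hss)]
  refine ⟨σ, σ', happ, fun x => ?_, fun x => ?_⟩
  · rw [trace_eq_sum_embeddings, huniv, Finset.sum_pair (Ne.symm hss)]
  · rw [Algebra.norm_eq_prod_embeddings, huniv, Finset.prod_pair (Ne.symm hss)]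

lemma TN_facts (K : Type) [Field K] [NumberField K]
    (hdeg : Module.finrank ℚ K = 2) (him : IsEmpty (K →+* ℝ)) (x : 𝓞 K) :
    (x ^ 2 - (Algebra.trace ℤ (𝓞 K) x : 𝓞 K) * x + (Algebra.norm ℤ x : 𝓞 K) = 0)
    ∧ (IsUnit x → Algebra.norm ℤ x = 1 ∧ Algebra.trace ℤ (𝓞 K) x ≤ 2 ∧
        -2 ≤ Algebra.trace ℤ (𝓞 K) x)
    ∧ (∀ k : ℤ, x = (k : 𝓞 K) → Algebra.norm ℤ x = k ^ 2)
    ∧ (0 ≤ Algebra.norm ℤ x) := by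
  obtain ⟨σ, σ', happ, htr, hnm⟩ := exists_conj_pair K hdeg him
  set T : ℤ := Algebra.trace ℤ (𝓞 K) x with hT
  set N : ℤ := Algebra.norm ℤ x with hN
  set φ : 𝓞 K →+* ℂ := σ.toRingHom.comp (algebraMap (𝓞 K) K) with hφ
  have hφinj : Function.Injective φ :=
    σ.toRingHom.injective.comp (RingOfIntegers.coe_injective (K := K))
  set z : ℂ := φ x with hz
  have hTz : (T : ℂ) = z + (starRingEnd ℂ) z := by
    have h1 : ((T : ℚ) : ℂ) = σ (x : K) + σ' (x : K) := by
      rw [hT, Algebra.coe_trace_int, ← htr (x : K)]; norm_cast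
    rw [happ] at h1
    exact_mod_cast h1
  have hNz : (N : ℂ) = z * (starRingEnd ℂ) z := by
    have h1 : ((N : ℚ) : ℂ) = σ (x : K) * σ' (x : K) := by
      rw [hN, Algebra.coe_norm_int, ← hnm (x : K)]; norm_cast
    rw [happ] at h1
    exact_mod_cast h1
  have hNsq0 : (N : ℝ) = Complex.normSq z := by
    have := hNz.trans (Complex.mul_conj z)
    exact_mod_cast this
  refine ⟨?_, ?_, ?_, ?_⟩
  · apply hφinj
    rw [map_add, map_sub, map_pow, map_mul, map_intCast, map_intCast, map_zero, hTz, hNz]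
    ring
  · intro hx
    have hNsq : (N : ℝ) = Complex.normSq z := by
      have := hNz.trans (Complex.mul_conj z)
      exact_mod_cast this
    have hNu : IsUnit N := hx.map (Algebra.norm ℤ)
    have hN1 : N = 1 := by
      rcases Int.isUnit_iff.mp hNu with h | h
      · exact h
      · exfalso
        have h2 : ((-1 : ℤ) : ℝ) = Complex.normSq z := h ▸ hNsq
        norm_num at h2
        nlinarith [Complex.normSq_nonneg z]
    have habs : ‖z‖ = 1 := by
      have h2 : ‖z‖ ^ 2 = 1 := by
        rw [Complex.sq_norm, ← hNsq, hN1]; norm_num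
      nlinarith [norm_nonneg z]
    have hre : (T : ℝ) = 2 * z.re := by
      have := hTz.trans (Complex.add_conj z)
      exact_mod_cast this
    have h3 : |(T : ℝ)| ≤ 2 := by
      rw [hre, abs_mul]
      have := Complex.abs_re_le_norm z
      rw [habs] at this
      simp only [abs_of_pos, abs_two]
      nlinarith [abs_nonneg z.re]
    constructor
    · exact hN1
    constructor
    · exact_mod_cast (abs_le.mp (by exact_mod_cast h3 : |(T:ℝ)| ≤ ((2:ℤ):ℝ))).2
    · exact_mod_cast (abs_le.mp (by exact_mod_cast h3 : |(T:ℝ)| ≤ ((2:ℤ):ℝ))).1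
  · intro k hk
    have : (N : ℂ) = (k : ℂ) * (k : ℂ) := by
      rw [hNz, hz, hk, map_intCast, map_intCast]
    have : (N : ℂ) = ((k ^ 2 : ℤ) : ℂ) := by rw [this]; push_cast; ring
    exact_mod_cast this
  · have := Complex.normSq_nonneg z
    rw [← hNsq0] at this
    exact_mod_cast this

set_option synthInstance.maxHeartbeats 400000 in
set_option maxHeartbeats 800000 in
lemma resid (K : Type) [Field K] [NumberField K] (l : 𝓞 K)
    (h3 : Algebra.norm ℤ l = 3) (b : 𝓞 K) : ∃ c : ℤ, l ∣ (b - (c : 𝓞 K)) := by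
  have habs : Ideal.absNorm (Ideal.span {l}) = 3 := by
    rw [Ideal.absNorm_span_singleton, h3]; rfl
  have hcard : Nat.card (𝓞 K ⧸ Ideal.span {l}) = 3 := by
    rw [← Submodule.cardQuot_apply, ← Ideal.absNorm_apply, habs]
  have : Finite (𝓞 K ⧸ Ideal.span {l}) := Nat.finite_of_card_ne_zero (by omega)
  have hnt : Nontrivial (𝓞 K ⧸ Ideal.span {l}) :=
    Finite.one_lt_card_iff_nontrivial.mp (by omega)
  have hdvd : Nat.card (AddSubgroup.zmultiples (1 : 𝓞 K ⧸ Ideal.span {l})) ∣ 3 :=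
    hcard ▸ AddSubgroup.card_addSubgroup_dvd_card _
  have hH3 : Nat.card (AddSubgroup.zmultiples (1 : 𝓞 K ⧸ Ideal.span {l})) = 3 := by
    rcases (Nat.prime_three.eq_one_or_self_of_dvd _ hdvd) with h | h
    · exfalso
      have hb : AddSubgroup.zmultiples (1 : 𝓞 K ⧸ Ideal.span {l}) = ⊥ :=
        AddSubgroup.card_eq_one.mp h
      have h1 : (1 : 𝓞 K ⧸ Ideal.span {l}) ∈ AddSubgroup.zmultiples (1 : 𝓞 K ⧸ Ideal.span {l}) :=
        AddSubgroup.mem_zmultiples 1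
      rw [hb, AddSubgroup.mem_bot] at h1
      exact one_ne_zero h1
    · exact h
  have htop : AddSubgroup.zmultiples (1 : 𝓞 K ⧸ Ideal.span {l}) = ⊤ :=
    AddSubgroup.eq_top_of_card_eq _ (hH3.trans hcard.symm)
  have hmem : (Ideal.Quotient.mk (Ideal.span {l}) b) ∈
      AddSubgroup.zmultiples (1 : 𝓞 K ⧸ Ideal.span {l}) := htop ▸ AddSubgroup.mem_top _
  obtain ⟨c, hc⟩ := AddSubgroup.mem_zmultiples_iff.mp hmem
  refine ⟨c, Ideal.mem_span_singleton.mp ?_⟩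
  rw [← Ideal.Quotient.eq_zero_iff_mem, map_sub, map_intCast,
    ← zsmul_one (R := 𝓞 K ⧸ Ideal.span {l}) c, hc, sub_self]

/-- `R_K` for a number field `K`, as a subset of the ring of integers `𝓞 K`. -/
def RKnf (K : Type) [Field K] : Set (𝓞 K) :=
  {x | ∀ ε : (𝓞 K)ˣ, ∃ δ : (𝓞 K)ˣ, ∃ w : 𝓞 K,
    (δ : 𝓞 K) - 1 = ((ε : 𝓞 K) - 1) * x + ((ε : 𝓞 K) - 1) ^ 2 * w}

theorem stmt6 (K : Type) [Field K] [NumberField K]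
    (hdeg : Module.finrank ℚ K = 2) (him : IsEmpty (K →+* ℝ)) :
    RKnf K = {z : 𝓞 K | ∃ (a : ℤ) (b : 𝓞 K), z = (a : 𝓞 K) + 2 * b} := by
  have two_ne : (2 : 𝓞 K) ≠ 0 := two_ne_zero
  have norm4 : Algebra.norm ℤ (2 : 𝓞 K) = 4 :=
    (TN_facts K hdeg him (2 : 𝓞 K)).2.2.1 2 (by push_cast; ring)
  ext x
  simp only [RKnf, Set.mem_setOf_eq]
  constructor
  · intro hx
    obtain ⟨δ, w, hδ⟩ := hx (-1)
    simp only [Units.val_neg, Units.val_one] at hδ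
    obtain ⟨hquad, hunit, -, -⟩ := TN_facts K hdeg him (δ : 𝓞 K)
    obtain ⟨hN1, hT2, hT2'⟩ := hunit δ.isUnit
    rw [hN1] at hquad
    set d : 𝓞 K := (δ : 𝓞 K) with hdd
    set T : ℤ := Algebra.trace ℤ (𝓞 K) d with hT
    push_cast at hquad
    set y : 𝓞 K := 2 * w - x with hy
    have hdy : d = 1 + 2 * y := by rw [hy]; linear_combination hδ
    have hkey : ((2 - T : ℤ) : 𝓞 K) = 2 * ((T : 𝓞 K) * y - 2 * y - 2 * y ^ 2) := by
      push_cast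
      linear_combination hquad + (-d + (T : 𝓞 K) - 1 - 2 * y) * hdy
    clear_value T d
    clear hdd
    interval_cases T
    · -- T = -2 : d = -1
      have hm1 : (d + 1) ^ 2 = 0 := by linear_combination hquad
      have hdm1 : d = -1 := eq_neg_of_add_eq_zero_left (pow_eq_zero_iff two_ne_zero |>.mp hm1)
      rw [hdm1] at hδ
      have h2x : 2 * x = 2 * (1 + 2 * w) := by linear_combination hδ
      exact ⟨1, w, by push_cast; exact mul_left_cancel₀ two_ne h2x⟩
    · -- T = -1 : impossible
      exfalso
      obtain ⟨s, hs⟩ : ∃ s : 𝓞 K, ((3 : ℤ) : 𝓞 K) = 2 * s :=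
        ⟨-3 * y - 2 * y ^ 2, by push_cast at hkey ⊢; linear_combination hkey⟩
      have h1 : Algebra.norm ℤ ((3 : ℤ) : 𝓞 K) = 9 := by
        rw [(TN_facts K hdeg him _).2.2.1 3 rfl]; norm_num
      rw [hs, map_mul, norm4] at h1
      omega
    · -- T = 0 : impossible
      exfalso
      have h2 : (2 : 𝓞 K) * 1 = 2 * (2 * (-y - y ^ 2)) := by
        push_cast at hkey; linear_combination hkey
      have h1 : (1 : 𝓞 K) = 2 * (-y - y ^ 2) := mul_left_cancel₀ two_ne h2
      have h3 : (1 : ℤ) = 4 * Algebra.norm ℤ (-y - y ^ 2) := by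
        have := congrArg (Algebra.norm ℤ) h1
        rwa [map_one, map_mul, norm4] at this
      omega
    · -- T = 1 : impossible
      exfalso
      obtain ⟨s, hs⟩ : ∃ s : 𝓞 K, ((1 : ℤ) : 𝓞 K) = 2 * s :=
        ⟨-y - 2 * y ^ 2, by push_cast at hkey ⊢; linear_combination hkey⟩
      have h1 : Algebra.norm ℤ ((1 : ℤ) : 𝓞 K) = 1 := by
        rw [(TN_facts K hdeg him _).2.2.1 1 rfl]; norm_num
      rw [hs, map_mul, norm4] at h1
      omega
    · -- T = 2 : d = 1
      have hm1 : (d - 1) ^ 2 = 0 := by linear_combination hquad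
      have hdm1 : d = 1 := by
        have := pow_eq_zero_iff (n := 2) two_ne_zero |>.mp hm1
        linear_combination this
      rw [hdm1] at hδ
      have h2x : 2 * x = 2 * (0 + 2 * w) := by linear_combination hδ
      exact ⟨0, w, by push_cast; exact mul_left_cancel₀ two_ne h2x⟩
  · rintro ⟨a, b, rfl⟩ ε
    set e : 𝓞 K := (ε : 𝓞 K) with he
    set f : 𝓞 K := ((ε⁻¹ : (𝓞 K)ˣ) : 𝓞 K) with hf
    have hef : e * f = 1 := by rw [he, hf, ← Units.val_mul, mul_inv_cancel, Units.val_one]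
    obtain ⟨hquad, hunit, -, hpos⟩ := TN_facts K hdeg him e
    obtain ⟨hN1, hT2, hT2'⟩ := hunit ε.isUnit
    rw [hN1] at hquad
    set T : ℤ := Algebra.trace ℤ (𝓞 K) e with hT
    push_cast at hquad
    -- the predicate
    set P : 𝓞 K → Prop := fun c => ∃ δ : (𝓞 K)ˣ, ∃ v : 𝓞 K,
      (δ : 𝓞 K) - 1 = (e - 1) * c + (e - 1) ^ 2 * v with hP
    have h0 : P 0 := ⟨1, 0, by simp⟩
    have hsucc : ∀ c, P c → P (c + 1) := by
      rintro c ⟨δ, v, hv⟩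
      exact ⟨ε * δ, v + c + (e - 1) * v, by
        rw [Units.val_mul, ← he]
        linear_combination e * hv⟩
    have hpred : ∀ c, P c → P (c - 1) := by
      rintro c ⟨δ, v, hv⟩
      exact ⟨ε⁻¹ * δ, f * (v - c + 1), by
        rw [Units.val_mul, ← hf]
        linear_combination f * hv + (2 - e + (e - 1) * c) * hef⟩
    have hint : ∀ m : ℤ, P ((m : ℤ) : 𝓞 K) := by
      intro m
      induction m using Int.induction_on with
      | zero => exact_mod_cast h0
      | succ n ih => have := hsucc _ ih; push_cast at this ⊢; exact this
      | pred n ih => have := hpred _ ih; push_cast at this ⊢; exact this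
    have hshift : ∀ (c c' : 𝓞 K), P c → (e - 1) ∣ (c' - c) → P c' := by
      rintro c c' ⟨δ, v, hv⟩ ⟨k, hk⟩
      exact ⟨δ, v - k, by linear_combination hv - (e - 1) * hk⟩
    -- find integer m with (e-1) ∣ (a + 2b - m)
    have hsq : (e - 1) ^ 2 = ((T : 𝓞 K) - 2) * e := by linear_combination hquad
    rcases eq_or_ne (e - 1) 0 with he0 | hne0
    · exact ⟨1, 0, by rw [he0]; simp⟩
    suffices hgoal : ∃ m : ℤ, (e - 1) ∣ ((a : 𝓞 K) + 2 * b - (m : 𝓞 K)) by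
      obtain ⟨m, hm⟩ := hgoal
      exact hshift _ _ (hint m) hm
    interval_cases T
    · -- T = -2 : e = -1
      have hm1 : (e + 1) ^ 2 = 0 := by linear_combination hquad
      have he1 : e = -1 := eq_neg_of_add_eq_zero_left (pow_eq_zero_iff two_ne_zero |>.mp hm1)
      exact ⟨a, ⟨-b, by rw [he1]; ring⟩⟩
    · -- T = -1 : norm (e-1) = 3
      have hn3 : Algebra.norm ℤ (e - 1) = 3 := by
        have h9 : Algebra.norm ℤ (e - 1) ^ 2 = 9 := by
          have h1 : (e - 1) ^ 2 = ((-3 : ℤ) : 𝓞 K) * e := by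
            rw [hsq]; push_cast; ring
          have := congrArg (Algebra.norm ℤ) h1
          rw [map_pow, map_mul, hN1,
            (TN_facts K hdeg him _).2.2.1 (-3) rfl] at this
          omega
        have := (TN_facts K hdeg him (e - 1)).2.2.2
        nlinarith
      obtain ⟨c, hc⟩ := resid K (e - 1) hn3 b
      refine ⟨a + 2 * c, ?_⟩
      obtain ⟨k, hk⟩ := hc
      exact ⟨2 * k, by push_cast; linear_combination 2 * hk⟩
    · -- T = 0 : (e-1) ∣ 2
      refine ⟨a, ⟨-(e - 1) * f * b, ?_⟩⟩
      push_cast at hsq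
      linear_combination f * b * hsq - 2 * b * hef
    · -- T = 1 : e - 1 is a unit
      refine ⟨a, ⟨-(e - 1) * f * 2 * b, ?_⟩⟩
      push_cast at hsq ⊢
      linear_combination 2 * f * b * hsq - 2 * b * hef
    · -- T = 2 : e = 1, contradiction with hne0
      exfalso
      have hm1 : (e - 1) ^ 2 = 0 := by linear_combination hquad
      exact hne0 (pow_eq_zero_iff two_ne_zero |>.mp hm1)
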